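/- Let R be a finite set with |R| = n, let m ≥ 1 be a natural number, and let 𝒱 be any set of pairs (r, L) with L ⊆ R, r ∈ L, and |L| ≤ m. Define the arc set A of the generated graph as the union of: (I) all pairs ((r, L), (p, K)) with (r, L) ∈ 𝒱, (p, K) ∈ 𝒱, |L| > 1, and K = L \ {r}; (II) all pairs ((r, L), e) with (r, L) ∈ 𝒱 and |L| = 1; and (III) all pairs (s, (r, L)) with (r, L) ∈ 𝒱, where s and e are the two depot symbols. Then |A| ≤ n · Σ_{i=0}^{m-1} C(n−1, i) + n · Σ_{i=0}^{m-1} i · C(n−1, i) + n. -/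

import Mathlib

open Finset


lemma aux_split {α : Type*} [DecidableEq α] (s : Finset α) (m : ℕ) :
    s.powerset.filter (fun t => t.card < m) =
      (Finset.range m).biUnion (fun i => s.powersetCard i) := by
  ext t
  simp only [mem_filter, mem_powerset, mem_biUnion, mem_range, Finset.mem_powersetCard]
  aesop

lemma aux_disj {α : Type*} [DecidableEq α] (s : Finset α) (m : ℕ) :
    (↑(Finset.range m) : Set ℕ).PairwiseDisjoint (fun i => s.powersetCard i) := by
  intro i _ j _ hij
  simp only [Function.onFun, Finset.disjoint_left]
  intro t ht ht'
  rw [Finset.mem_powersetCard] at ht ht'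
  exact hij (ht.2 ▸ ht'.2 ▸ rfl)

lemma aux_card {α : Type*} [DecidableEq α] (s : Finset α) (m : ℕ) :
    (s.powerset.filter (fun t => t.card < m)).card =
      ∑ i ∈ Finset.range m, s.card.choose i := by
  rw [aux_split, Finset.card_biUnion]
  · simp [Finset.card_powersetCard]
  · intro i hi j hj hij; exact aux_disj s m (by simpa using hi) (by simpa using hj) hij

lemma aux_sum {α : Type*} [DecidableEq α] (s : Finset α) (m : ℕ) :
    ∑ t ∈ s.powerset.filter (fun t => t.card < m), t.card =
      ∑ i ∈ Finset.range m, i * s.card.choose i := by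
  rw [aux_split, Finset.sum_biUnion (aux_disj s m)]
  refine Finset.sum_congr rfl fun i _ => ?_
  rw [Finset.sum_congr rfl (fun t ht => (Finset.mem_powersetCard.1 ht).2),
    Finset.sum_const, Finset.card_powersetCard, smul_eq_mul, mul_comm]

lemma aux_V_card {α : Type*} [DecidableEq α] (R : Finset α) (m : ℕ)
    (V : Finset (α × Finset α))
    (hV : ∀ p ∈ V, p.2 ⊆ R ∧ p.1 ∈ p.2 ∧ p.2.card ≤ m) :
    V.card ≤ (R.sigma (fun r => (R.erase r).powerset.filter (fun t => t.card < m))).card := by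
  apply Finset.card_le_card_of_injOn (fun v => ⟨v.1, v.2.erase v.1⟩)
  · intro v hv
    obtain ⟨h1, h2, h3⟩ := hV v hv
    simp only [Finset.mem_coe, Finset.mem_sigma, mem_filter, mem_powerset]
    refine ⟨h1 h2, Finset.erase_subset_erase _ h1, ?_⟩
    have := Finset.card_erase_of_mem h2
    have hc : 1 ≤ v.2.card := Finset.card_pos.2 ⟨v.1, h2⟩
    omega
  · intro v hv w hw h
    obtain ⟨h1, h2⟩ := Sigma.mk.inj_iff.1 h
    have h2' : v.2.erase v.1 = w.2.erase w.1 := by exact_mod_cast heq_eq_eq _ _ ▸ h2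
    have := (hV v hv).2.1
    have := (hV w hw).2.1
    have : v.2 = w.2 := by
      rw [← Finset.insert_erase (hV v hv).2.1, ← Finset.insert_erase (hV w hw).2.1, h2', h1]
    exact Prod.ext h1 this

lemma aux_F_card {α : Type*} [DecidableEq α] (R : Finset α) (m : ℕ)
    (V : Finset (α × Finset α))
    (hV : ∀ p ∈ V, p.2 ⊆ R ∧ p.1 ∈ p.2 ∧ p.2.card ≤ m) :
    ((V ×ˢ V).filter (fun p => 1 < p.1.2.card ∧ p.2.2 = p.1.2.erase p.1.1)).card ≤
      (R.sigma (fun r => ((R.erase r).powerset.filter (fun t => t.card < m)).sigma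
        (fun t => t))).card := by
  apply Finset.card_le_card_of_injOn (fun p => ⟨p.1.1, p.1.2.erase p.1.1, p.2.1⟩)
  · intro p hp
    simp only [Finset.mem_coe, Finset.mem_filter, Finset.mem_product] at hp
    obtain ⟨⟨hv, hw⟩, _, hK⟩ := hp
    obtain ⟨h1, h2, h3⟩ := hV p.1 hv
    obtain ⟨g1, g2, g3⟩ := hV p.2 hw
    simp only [Finset.mem_coe, Finset.mem_sigma, mem_filter, mem_powerset]
    refine ⟨h1 h2, ⟨Finset.erase_subset_erase _ h1, ?_⟩, hK ▸ g2⟩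
    have := Finset.card_erase_of_mem h2
    have hc : 1 ≤ p.1.2.card := Finset.card_pos.2 ⟨p.1.1, h2⟩
    omega
  · intro p hp q hq h
    simp only [Finset.mem_coe, Finset.mem_filter, Finset.mem_product] at hp hq
    obtain ⟨⟨hv, hw⟩, _, hK⟩ := hp
    obtain ⟨⟨hv', hw'⟩, _, hK'⟩ := hq
    obtain ⟨h1, h2⟩ := Sigma.mk.inj_iff.1 h
    obtain ⟨h2a, h2b⟩ := Sigma.mk.inj_iff.1 (eq_of_heq h2)
    have h2a' : p.1.2.erase p.1.1 = q.1.2.erase q.1.1 := h2a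
    have h2b' : p.2.1 = q.2.1 := eq_of_heq h2b
    have hfst : p.1 = q.1 := by
      refine Prod.ext h1 ?_
      rw [← Finset.insert_erase (hV p.1 hv).2.1, ← Finset.insert_erase (hV q.1 hv').2.1,
        h2a', h1]
    have hsnd : p.2 = q.2 := Prod.ext h2b' (by rw [hK, hK', h2a'])
    exact Prod.ext hfst hsnd


/-- Arc-count bound (30) of the paper.  Vertices of the generated graph are either
delivery vertices `Sum.inl (r, L)` (with `r ∈ L ⊆ R`, `|L| ≤ m`) or the depot
symbols `s = Sum.inr true` and `e = Sum.inr false`.  Arcs are generated by the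
three rules:
I.  `((r, L), (p, K))` with both endpoints in `𝒱`, `|L| > 1` and `K = L \ {r}`;
II. `((r, L), e)` with `(r, L) ∈ 𝒱` and `|L| = 1`;
III. `(s, (r, L))` with `(r, L) ∈ 𝒱`.
Then `|A| ≤ n·Σ_{i<m} C(n-1,i) + n·Σ_{i<m} i·C(n-1,i) + n` where `n = |R|`. -/
theorem stmt_6 {α : Type*} [DecidableEq α] (R : Finset α) (n m : ℕ) (hn : R.card = n)
    (hm : 1 ≤ m) (V : Finset (α × Finset α))
    (hV : ∀ p ∈ V, p.2 ⊆ R ∧ p.1 ∈ p.2 ∧ p.2.card ≤ m) :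
    (((V ×ˢ V).filter (fun p => 1 < p.1.2.card ∧ p.2.2 = p.1.2.erase p.1.1)).image
          (fun p => ((Sum.inl p.1 : (α × Finset α) ⊕ Bool), (Sum.inl p.2 : (α × Finset α) ⊕ Bool)))
        ∪ ((V.filter (fun v => v.2.card = 1)).image
          (fun v => ((Sum.inl v : (α × Finset α) ⊕ Bool), (Sum.inr false : (α × Finset α) ⊕ Bool))))
        ∪ (V.image
          (fun v => ((Sum.inr true : (α × Finset α) ⊕ Bool), (Sum.inl v : (α × Finset α) ⊕ Bool))))).card
      ≤ n * ∑ i ∈ Finset.range m, (n - 1).choose i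
        + n * ∑ i ∈ Finset.range m, i * (n - 1).choose i + n := by
  have key : ∀ r ∈ R, (R.erase r).card = n - 1 := fun r hr => by
    rw [Finset.card_erase_of_mem hr, hn]
  -- bound I
  have hI : (((V ×ˢ V).filter (fun p => 1 < p.1.2.card ∧ p.2.2 = p.1.2.erase p.1.1)).image
      (fun p => ((Sum.inl p.1 : (α × Finset α) ⊕ Bool), (Sum.inl p.2 : (α × Finset α) ⊕ Bool)))).card
      ≤ n * ∑ i ∈ Finset.range m, i * (n - 1).choose i := by
    refine le_trans (Finset.card_image_le) (le_trans (aux_F_card R m V hV) ?_)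
    rw [Finset.card_sigma]
    have : ∀ r ∈ R, (((R.erase r).powerset.filter (fun t => t.card < m)).sigma
        (fun t => t)).card = ∑ i ∈ Finset.range m, i * (n - 1).choose i := by
      intro r hr
      rw [Finset.card_sigma]
      rw [show (∑ t ∈ (R.erase r).powerset.filter (fun t => t.card < m), t.card)
          = ∑ i ∈ Finset.range m, i * (R.erase r).card.choose i from aux_sum _ m, key r hr]
    rw [Finset.sum_congr rfl this, Finset.sum_const, hn, smul_eq_mul]
  -- bound II
  have hII : ((V.filter (fun v => v.2.card = 1)).image
      (fun v => ((Sum.inl v : (α × Finset α) ⊕ Bool), (Sum.inr false : (α × Finset α) ⊕ Bool)))).card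
      ≤ n := by
    refine le_trans Finset.card_image_le (hn ▸ ?_)
    apply Finset.card_le_card_of_injOn (fun v => v.1)
    · intro v hv
      simp only [Finset.mem_coe, Finset.mem_filter] at hv
      exact (hV v hv.1).1 (hV v hv.1).2.1
    · intro v hv w hw h
      simp only [Finset.mem_coe, Finset.mem_filter] at hv hw
      have sv : v.2 = {v.1} := by
        obtain ⟨a, ha⟩ := Finset.card_eq_one.1 hv.2
        have := (hV v hv.1).2.1
        rw [ha] at this ⊢
        rw [Finset.mem_singleton.1 this]
      have sw : w.2 = {w.1} := by
        obtain ⟨a, ha⟩ := Finset.card_eq_one.1 hw.2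
        have := (hV w hw.1).2.1
        rw [ha] at this ⊢
        rw [Finset.mem_singleton.1 this]
      have h' : v.1 = w.1 := h
      exact Prod.ext h' (by rw [sv, sw, h'])
  -- bound III
  have hIII : (V.image
      (fun v => ((Sum.inr true : (α × Finset α) ⊕ Bool), (Sum.inl v : (α × Finset α) ⊕ Bool)))).card
      ≤ n * ∑ i ∈ Finset.range m, (n - 1).choose i := by
    refine le_trans Finset.card_image_le (le_trans (aux_V_card R m V hV) ?_)
    rw [Finset.card_sigma]
    have : ∀ r ∈ R, ((R.erase r).powerset.filter (fun t => t.card < m)).card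
        = ∑ i ∈ Finset.range m, (n - 1).choose i := fun r hr => by
      rw [aux_card, key r hr]
    rw [Finset.sum_congr rfl this, Finset.sum_const, hn, smul_eq_mul]
  calc _ ≤ _ := Finset.card_union_le _ _
    _ ≤ _ := add_le_add (Finset.card_union_le _ _) le_rfl
    _ ≤ _ := by
        refine le_trans (add_le_add (add_le_add hI hII) hIII) ?_
        omega
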